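/- Let M be a positive multiple of 4 and L₁ ≥ 1 an integer. Let (Y_t)_{t≥1} be i.i.d. uniform on {1,…,M} and σ = min{t ≥ L₁ : Y_t ≡ 3 (mod 4) and Y_{t+1} ≡ 2 (mod 4)}. Then for every integer k ≥ 0, P( σ = L₁ + k and Y_i ≢ 2 (mod 4) for all i with L₁ < i ≤ L₁ + k ) ≥ (1/4)² · (3/4)^{k}. -/

import Mathlib

open MeasureTheory ProbabilityTheory
open scoped ENNReal

private lemma filter_mod_eq_image (n r : ℕ) (hr1 : 1 ≤ r) (hr4 : r < 4) :
    ((Finset.Icc 1 (4*n)).filter (fun m => m % 4 = r))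
      = (Finset.range n).image (fun i => 4*i+r) := by
  ext m
  simp only [Finset.mem_filter, Finset.mem_Icc, Finset.mem_image, Finset.mem_range]
  constructor
  · rintro ⟨⟨h1, h2⟩, hr⟩
    exact ⟨m / 4, by omega, by omega⟩
  · rintro ⟨i, hi, rfl⟩
    omega

private lemma card_filter_mod (n r : ℕ) (hr1 : 1 ≤ r) (hr4 : r < 4) :
    ((Finset.Icc 1 (4*n)).filter (fun m => m % 4 = r)).card = n := by
  rw [filter_mod_eq_image n r hr1 hr4,
    Finset.card_image_of_injective _ (fun a b h => by omega), Finset.card_range]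

private lemma one_sub_quarter : (1:ℝ≥0∞) - 4⁻¹ = 3/4 :=
  ENNReal.sub_eq_of_eq_add (by norm_num) (by
    rw [← one_div, ENNReal.div_add_div_same, show (3:ℝ≥0∞)+1 = 4 by norm_num,
      ENNReal.div_self (by norm_num) (by norm_num)])

/-- **Prescribing the excess length of a level-1 Y-block.** For `M` a positive
multiple of `4`, `L₁ ≥ 1`, and `(Y_t)` i.i.d. uniform on `{1, …, M}` with
`σ = min {t ≥ L₁ : Y_t ≡ 3 [MOD 4], Y_{t+1} ≡ 2 [MOD 4]}`, for every `k ≥ 0`,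
`P(σ = L₁ + k and Y_i ≢ 2 [MOD 4] for all L₁ < i ≤ L₁ + k) ≥ (1/4)² (3/4)^k`. -/
theorem level_one_block_prescribed_length (M L₁ : ℕ) (hM4 : 4 ∣ M) (hM : 0 < M)
    (hL₁ : 1 ≤ L₁)
    (Ω : Type) [MeasurableSpace Ω] (μ : Measure Ω) [IsProbabilityMeasure μ]
    (Y : ℕ → Ω → ℕ)
    (hmeas : ∀ j, Measurable (Y j))
    (hrange : ∀ j ω, Y j ω ∈ Finset.Icc 1 M)
    (hunif : ∀ j k, k ∈ Finset.Icc 1 M → μ {ω | Y j ω = k} = (M : ℝ≥0∞)⁻¹)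
    (hindep : iIndepFun Y μ) :
    ∀ k : ℕ,
      ((4 : ℝ≥0∞)⁻¹) ^ (2 : ℕ) * ((3 : ℝ≥0∞) / 4) ^ k ≤
        μ {ω | sInf {t | L₁ ≤ t ∧ Y t ω % 4 = 3 ∧ Y (t + 1) ω % 4 = 2} = L₁ + k ∧
            ∀ i, L₁ < i → i ≤ L₁ + k → Y i ω % 4 ≠ 2} := by
  obtain ⟨n, rfl⟩ := hM4
  have hn : n ≠ 0 := by omega
  -- probability that Y j has a given residue r ∈ {1,2,3} mod 4 is 1/4
  have hmod : ∀ j r, 1 ≤ r → r < 4 → μ (Y j ⁻¹' {m | m % 4 = r}) = 4⁻¹ := by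
    intro j r hr1 hr4
    have hset : Y j ⁻¹' {m | m % 4 = r}
        = ⋃ m ∈ ((Finset.Icc 1 (4*n)).filter (fun m => m % 4 = r)), {ω | Y j ω = m} := by
      ext ω
      simp only [Set.mem_preimage, Set.mem_setOf_eq, Set.mem_iUnion, Finset.mem_filter]
      constructor
      · intro h
        exact ⟨Y j ω, ⟨⟨hrange j ω, h⟩, rfl⟩⟩
      · rintro ⟨m, ⟨⟨_, hm⟩, rfl⟩⟩
        exact hm
    rw [hset, measure_biUnion_finset ?_ ?_]
    · rw [Finset.sum_congr rfl (fun m hm => hunif j m (Finset.mem_filter.mp hm).1),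
        Finset.sum_const, card_filter_mod n r hr1 hr4, nsmul_eq_mul]
      push_cast
      rw [ENNReal.mul_inv (by norm_num) (by simp), ← mul_assoc, mul_comm (n:ℝ≥0∞),
        mul_assoc, ENNReal.mul_inv_cancel (by exact_mod_cast hn) (by simp), mul_one]
    · intro a _ b _ hab
      simp only [Function.onFun, Set.disjoint_left, Set.mem_setOf_eq]
      rintro ω rfl h
      exact hab h
    · intro m _
      exact hmeas j (measurableSet_singleton m)
  have hne2 : ∀ j, μ (Y j ⁻¹' {m | m % 4 ≠ 2}) = 3/4 := by
    intro j
    have : Y j ⁻¹' {m | m % 4 ≠ 2} = (Y j ⁻¹' {m | m % 4 = 2})ᶜ := by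
      ext ω; simp
    rw [this, measure_compl (hmeas j (by
        exact Set.Countable.measurableSet (Set.to_countable _))) (measure_ne_top μ _),
      measure_univ, hmod j 2 (by norm_num) (by norm_num), one_sub_quarter]
  intro k
  -- the witness event
  set S : ℕ → Set ℕ := fun i =>
    if i = L₁ + k then {m | m % 4 = 3}
    else if i = L₁ + k + 1 then {m | m % 4 = 2}
    else {m | m % 4 ≠ 2} with hS
  set T : Finset ℕ := Finset.Ioo L₁ (L₁ + k) ∪ {L₁ + k, L₁ + k + 1} with hT
  have hmem1 : L₁ + k ∈ T := by simp [hT]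
  have hmem2 : L₁ + k + 1 ∈ T := by simp [hT]
  have hμE : μ (⋂ i ∈ T, Y i ⁻¹' S i) = 4⁻¹ * 4⁻¹ * (3/4) ^ (k - 1) := by
    rw [hindep.meas_biInter (fun i _ =>
      ⟨S i, Set.Countable.measurableSet (Set.to_countable _), rfl⟩)]
    have hdisj : Disjoint (Finset.Ioo L₁ (L₁ + k)) ({L₁ + k, L₁ + k + 1} : Finset ℕ) := by
      simp only [Finset.disjoint_left, Finset.mem_Ioo, Finset.mem_insert, Finset.mem_singleton]
      omega
    rw [hT, Finset.prod_union hdisj, Finset.prod_pair (by omega)]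
    have h1 : ∀ i ∈ Finset.Ioo L₁ (L₁ + k), μ (Y i ⁻¹' S i) = 3/4 := by
      intro i hi
      simp only [Finset.mem_Ioo] at hi
      rw [hS]
      simp only [show i ≠ L₁ + k by omega, show i ≠ L₁ + k + 1 by omega, if_neg, ite_false]
      exact hne2 i
    rw [Finset.prod_congr rfl h1, Finset.prod_const, Nat.card_Ioo]
    have h2 : μ (Y (L₁ + k) ⁻¹' S (L₁ + k)) = 4⁻¹ := by
      rw [hS]; simp only [if_pos rfl]; exact hmod _ 3 (by norm_num) (by norm_num)
    have h3 : μ (Y (L₁ + k + 1) ⁻¹' S (L₁ + k + 1)) = 4⁻¹ := by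
      rw [hS]; simp only [show L₁ + k + 1 ≠ L₁ + k by omega, if_neg, ite_false, if_pos rfl]
      exact hmod _ 2 (by norm_num) (by norm_num)
    rw [h2, h3, show L₁ + k - L₁ - 1 = k - 1 by omega]
    ring
  -- the witness event is contained in the target event
  have hsub : (⋂ i ∈ T, Y i ⁻¹' S i) ⊆
      {ω | sInf {t | L₁ ≤ t ∧ Y t ω % 4 = 3 ∧ Y (t + 1) ω % 4 = 2} = L₁ + k ∧
        ∀ i, L₁ < i → i ≤ L₁ + k → Y i ω % 4 ≠ 2} := by
    intro ω hω
    simp only [Set.mem_iInter] at hω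
    have h3 : Y (L₁ + k) ω % 4 = 3 := by
      have h := hω (L₁ + k) hmem1
      simp [hS] at h
      exact h
    have h2 : Y (L₁ + k + 1) ω % 4 = 2 := by
      have h := hω (L₁ + k + 1) hmem2
      simp [hS, show L₁ + k + 1 ≠ L₁ + k by omega] at h
      exact h
    have hmid : ∀ i, L₁ < i → i < L₁ + k → Y i ω % 4 ≠ 2 := by
      intro i hi1 hi2
      have h := hω i (by simp [hT]; omega)
      simp [hS, show i ≠ L₁ + k by omega, show i ≠ L₁ + k + 1 by omega] at h
      exact h
    have htail : ∀ i, L₁ < i → i ≤ L₁ + k → Y i ω % 4 ≠ 2 := by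
      intro i hi1 hi2
      rcases eq_or_lt_of_le hi2 with rfl | hlt
      · omega
      · exact hmid i hi1 hlt
    refine ⟨?_, htail⟩
    have hAmem : L₁ + k ∈ {t | L₁ ≤ t ∧ Y t ω % 4 = 3 ∧ Y (t + 1) ω % 4 = 2} :=
      ⟨by omega, h3, h2⟩
    have hle : sInf {t | L₁ ≤ t ∧ Y t ω % 4 = 3 ∧ Y (t + 1) ω % 4 = 2} ≤ L₁ + k :=
      Nat.sInf_le hAmem
    have hmemInf := Nat.sInf_mem (⟨L₁ + k, hAmem⟩ :
      {t | L₁ ≤ t ∧ Y t ω % 4 = 3 ∧ Y (t + 1) ω % 4 = 2}.Nonempty)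
    rcases eq_or_lt_of_le hle with h | h
    · exact h
    · exfalso
      obtain ⟨ht1, _, ht3⟩ := hmemInf
      exact htail _ (by omega) (by omega) ht3
  calc ((4 : ℝ≥0∞)⁻¹) ^ (2 : ℕ) * ((3 : ℝ≥0∞) / 4) ^ k
      ≤ 4⁻¹ * 4⁻¹ * (3/4) ^ (k - 1) := by
        rw [pow_two]
        exact mul_le_mul_right (pow_le_pow_right_of_le_one'
          (by rw [ENNReal.div_le_iff (by norm_num) (by norm_num)]; norm_num) (by omega)) _
    _ = μ (⋂ i ∈ T, Y i ⁻¹' S i) := hμE.symm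
    _ ≤ _ := measure_mono hsub
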